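/- arXiv:2108.11090 — 2 statements merged into one kernel-verified Lean document; each statement's English description precedes it below -/
import Mathlib

section
/- Let λ be a nonzero real number and let r be an integer. For every n ≥ 0, the degenerate poly-Bell polynomials satisfy B_{n,λ}^{(r)}(x) = Σ_{k=0}^{n} { Σ_{l=k}^{n} C(n,l) S_{1,λ}(l,k) B_{n−l,λ}^{(r)} } φ_{k,λ}(x) as polynomials in x, where C(n,l) is the binomial coefficient. -/
open Nat PowerSeries Finset

noncomputable section

/-- λ-falling factorial (x)_{n,λ} = x(x−λ)···(x−(n−1)λ). -/
def dfall (l x : ℝ) (n : ℕ) : ℝ := ∏ i ∈ range n, (x - i * l)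

/-- degenerate exponential e_λ^x(t) = Σ (x)_{n,λ} t^n/n! as a formal power series. -/
def degExp (l x : ℝ) : PowerSeries ℝ := PowerSeries.mk fun n => dfall l x n / n !

/-- degenerate logarithm log_λ(1+t) = Σ_{n≥1} (∏_{j=1}^{n−1}(λ−j)) t^n/n!. -/
def degLog (l : ℝ) : PowerSeries ℝ :=
  PowerSeries.mk fun n => if n = 0 then 0 else (∏ j ∈ range (n - 1), (l - (j + 1))) / n !

/-- composition Σ_k a_k f^k, valid when f has zero constant term. -/
def psComp (a : ℕ → ℝ) (f : PowerSeries ℝ) : PowerSeries ℝ :=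
  PowerSeries.mk fun n => ∑ k ∈ range (n + 1), a k * PowerSeries.coeff n (f ^ k)

/-- e_λ^x(f), the degenerate exponential composed with f (f with zero constant term). -/
def degExpComp (l x : ℝ) (f : PowerSeries ℝ) : PowerSeries ℝ :=
  psComp (fun k => dfall l x k / k !) f

/-- degenerate Stirling numbers of the second kind. -/
def dS2 (l : ℝ) (n k : ℕ) : ℝ :=
  (n ! : ℝ) / k ! * PowerSeries.coeff n ((degExp l 1 - 1) ^ k)

/-- degenerate Stirling numbers of the first kind. -/
def dS1 (l : ℝ) (n k : ℕ) : ℝ :=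
  (n ! : ℝ) / k ! * PowerSeries.coeff n (degLog l ^ k)

/-- (signed) Stirling numbers of the first kind: coefficients of x(x-1)···(x-n+1). -/
def sS1 (n k : ℕ) : ℝ := (descPochhammer ℝ n).coeff k

/-- fully degenerate Bell polynomial φ_{n,λ}(x). -/
def dBell (l : ℝ) (n : ℕ) (x : ℝ) : ℝ := ∑ k ∈ range (n + 1), dS2 l n k * dfall l x k

/-- degenerate Whitney numbers of the second kind. -/
def dW (m : ℕ) (l : ℝ) (n k : ℕ) : ℝ :=
  (n ! : ℝ) / k ! *
    PowerSeries.coeff n (degExp l 1 * ((degExp l (m : ℝ) - 1) * PowerSeries.C (R := ℝ) (1 / m)) ^ k)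

/-- fully degenerate Dowling polynomial d_{m,λ}(n,x). -/
def dDowling (m : ℕ) (l : ℝ) (n : ℕ) (x : ℝ) : ℝ :=
  ∑ k ∈ range (n + 1), dW m l n k * dfall l x k

/-- division of a power series by t (coefficient shift). -/
def divT (f : PowerSeries ℝ) : PowerSeries ℝ :=
  PowerSeries.mk fun n => PowerSeries.coeff (n + 1) f

/-- degenerate Bernoulli polynomials β_{n,λ}(x): (t/(e_λ(t)−1)) e_λ^x(t) = Σ β_{n,λ}(x) tⁿ/n!. -/
def dBernoulliPoly (l : ℝ) (n : ℕ) (x : ℝ) : ℝ :=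
  (n ! : ℝ) * PowerSeries.coeff n ((divT (degExp l 1 - 1))⁻¹ * degExp l x)

/-- the λ-falling factorial polynomial (x)_{k,λ}. -/
def dfallPoly (l : ℝ) (k : ℕ) : Polynomial ℝ :=
  ∏ i ∈ range k, (Polynomial.X - Polynomial.C (i * l))

/-- degenerate poly-Bell polynomials B^{(r)}_{n,λ}(x). -/
def dPolyBell (r : ℤ) (l : ℝ) (n : ℕ) (x : ℝ) : ℝ :=
  (n ! : ℝ) * PowerSeries.coeff n
    (divT (psComp (fun k => if k = 0 then 0 else dfall l 1 k / ((k - 1)! * (k : ℝ) ^ r))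
        (degLog l)) *
      (divT (degExp l 1 - 1))⁻¹ * degExp l x)

/-- degenerate Bernoulli polynomials of the second kind b_{n,λ}(x). -/
def dBern2 (l : ℝ) (n : ℕ) (x : ℝ) : ℝ :=
  (n ! : ℝ) *
    PowerSeries.coeff n ((divT (degLog l))⁻¹ * PowerSeries.mk fun j => dfall 1 x j / j !)


-- vanishing lemma
lemma vanish {L : PowerSeries ℝ} (hL : PowerSeries.constantCoeff L = 0)
    {k p : ℕ} (h : p < k) : PowerSeries.coeff p (L ^ k) = 0 := by
  have hdvd : (PowerSeries.X : ℝ⟦X⟧) ^ k ∣ L ^ k :=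
    pow_dvd_pow_of_dvd (PowerSeries.X_dvd_iff.mpr hL) k
  exact (PowerSeries.X_pow_dvd_iff.mp hdvd) p h

lemma constantCoeff_degLog (l : ℝ) : PowerSeries.constantCoeff (degLog l) = 0 := by
  rw [← PowerSeries.coeff_zero_eq_constantCoeff_apply]
  simp [degLog]

-- ODE for degLog
lemma degLog_ODE (l : ℝ) :
    (1 + PowerSeries.X) * d⁄dX ℝ (degLog l)
      = 1 + PowerSeries.C l * degLog l := by
  ext n
  rw [add_mul, one_mul, map_add, map_add, PowerSeries.coeff_derivative]
  cases n with
  | zero =>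
    simp [degLog, PowerSeries.coeff_zero_X_mul]
  | succ p =>
    rw [PowerSeries.coeff_succ_X_mul, PowerSeries.coeff_derivative, PowerSeries.coeff_C_mul]
    simp only [degLog, PowerSeries.coeff_mk, PowerSeries.coeff_one, Nat.succ_ne_zero,
      if_false, if_neg (Nat.succ_ne_zero _)]
    have h1 : (p + 1 + 1) - 1 = p + 1 := by omega
    have h2 : (p + 1) - 1 = p := by omega
    rw [h1, h2, prod_range_succ]
    have hf1 : ((p + 1 + 1)! : ℝ) = (p + 1 + 1) * (p+1)! := by
      rw [Nat.factorial_succ]; push_cast; ring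
    have hne : ((p+1)! : ℝ) ≠ 0 := by positivity
    rw [hf1]
    field_simp
    push_cast
    ring



lemma stirRec (l : ℝ) (m N : ℕ) :
    ((N : ℝ) + 1) * PowerSeries.coeff (N + 1) (degLog l ^ (m + 1))
      = ((m : ℝ) + 1) * PowerSeries.coeff N (degLog l ^ m)
        + (((m : ℝ) + 1) * l - N) * PowerSeries.coeff N (degLog l ^ (m + 1)) := by
  set L := degLog l with hLdef
  have hser : (1 + PowerSeries.X) * d⁄dX ℝ (L ^ (m + 1))
      = (m + 1) • (L ^ m + PowerSeries.C l * L ^ (m + 1)) := by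
    rw [Derivation.leibniz_pow]
    have h1 : (m + 1) - 1 = m := by omega
    rw [h1, smul_eq_mul, mul_smul_comm]
    congr 1
    rw [mul_left_comm, degLog_ODE]
    ring
  have h := congrArg (PowerSeries.coeff N) hser
  rw [map_nsmul, map_add, PowerSeries.coeff_C_mul, add_mul, one_mul, map_add,
    PowerSeries.coeff_derivative] at h
  cases N with
  | zero =>
    rw [PowerSeries.coeff_zero_X_mul] at h
    simp only [nsmul_eq_mul] at h
    push_cast at h ⊢
    linear_combination h
  | succ p =>
    rw [PowerSeries.coeff_succ_X_mul, PowerSeries.coeff_derivative] at h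
    simp only [nsmul_eq_mul] at h
    push_cast at h ⊢
    linear_combination h

lemma afact (l : ℝ) (m : ℕ) :
    dfall l 1 (m+1) / (m+1)! * ((m:ℝ)+1) = dfall l 1 m / m ! * (1 - m * l) := by
  have h : dfall l 1 (m+1) = dfall l 1 m * (1 - m * l) := by
    simp [dfall, prod_range_succ]
  have hne : ((m)! : ℝ) ≠ 0 := by positivity
  rw [h, Nat.factorial_succ]
  push_cast
  field_simp

lemma crec (l : ℝ) (N : ℕ) :
    ((N:ℝ)+1) * (∑ k ∈ range (N+2), dfall l 1 k / k ! * PowerSeries.coeff (N+1) (degLog l ^ k))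
    = (1 - (N:ℝ)) * (∑ k ∈ range (N+1), dfall l 1 k / k ! * PowerSeries.coeff N (degLog l ^ k)) := by
  set L := degLog l with hL
  set u : ℕ → ℝ := fun i => dfall l 1 i / i ! * ((N:ℝ) - i*l) * PowerSeries.coeff N (L ^ i) with hu
  rw [Finset.mul_sum, Finset.sum_range_succ']
  have h0 : ((N:ℝ)+1) * (dfall l 1 0 / (0)! * PowerSeries.coeff (N+1) (L^0)) = 0 := by
    simp [PowerSeries.coeff_one]
  rw [h0, add_zero]
  have hu0 : u 0 = 0 := by
    rcases N with _ | p
    · simp [hu]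
    · simp [hu, PowerSeries.coeff_one]
  have huN : u (N+1) = 0 := by
    have := vanish (constantCoeff_degLog l) (lt_add_one N)
    simp only [hu]
    rw [show PowerSeries.coeff N (L ^ (N+1)) = 0 from this, mul_zero]
  calc ∑ i ∈ range (N + 1), ((N:ℝ)+1) * (dfall l 1 (i+1) / (i+1)! * PowerSeries.coeff (N+1) (L^(i+1)))
      = ∑ i ∈ range (N+1),
          ((1 - (N:ℝ)) * (dfall l 1 i / i ! * PowerSeries.coeff N (L^i)) + (u i - u (i+1))) := by
        refine Finset.sum_congr rfl fun i _ => ?_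
        simp only [hu]
        push_cast
        linear_combination (dfall l 1 (i+1) / ((i:ℕ)+1)! ) * stirRec l i N
          + (PowerSeries.coeff N (L^i)) * afact l i
    _ = (1 - (N:ℝ)) * (∑ k ∈ range (N+1), dfall l 1 k / k ! * PowerSeries.coeff N (L^k)) := by
        rw [Finset.sum_add_distrib, Finset.sum_range_sub' u, hu0, huN, ← Finset.mul_sum]
        ring

lemma cL (l : ℝ) (N : ℕ) :
    ∑ k ∈ range (N+1), dfall l 1 k / k ! * PowerSeries.coeff N (degLog l ^ k)
      = if N = 0 ∨ N = 1 then 1 else 0 := by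
  induction N with
  | zero => simp [dfall]
  | succ p ih =>
    have h := crec l p
    rw [ih] at h
    rcases p with _ | q
    · norm_num at h ⊢
      linarith
    · rcases q with _ | t
      · norm_num at h ⊢
        linarith
      · have hcond : ¬(t + 1 + 1 = 0 ∨ t + 1 + 1 = 1) := by omega
        have hcond2 : ¬(t + 1 + 1 + 1 = 0 ∨ t + 1 + 1 + 1 = 1) := by omega
        rw [if_neg hcond] at h
        rw [if_neg hcond2]
        have hne : ((t:ℝ) + 1 + 1 + 1) ≠ 0 := by positivity
        have : ((t:ℝ)+1+1+1) * (∑ k ∈ range (t+1+1+1+1), dfall l 1 k / k ! * PowerSeries.coeff (t+1+1+1) (degLog l ^ k)) = 0 := by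
          push_cast at h ⊢
          linarith
        exact (mul_eq_zero.mp this).resolve_left hne

lemma conv (L f g : PowerSeries ℝ) (hv : ∀ k p : ℕ, p < k → PowerSeries.coeff p (L^k) = 0)
    (n : ℕ) :
    ∑ k ∈ range (n+1), PowerSeries.coeff k (f*g) * PowerSeries.coeff n (L^k)
    = ∑ x ∈ Finset.HasAntidiagonal.antidiagonal n,
        (∑ i ∈ range (x.1+1), PowerSeries.coeff i f * PowerSeries.coeff x.1 (L^i))
        * (∑ j ∈ range (x.2+1), PowerSeries.coeff j g * PowerSeries.coeff x.2 (L^j)) := by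
  classical
  set T : ℕ × ℕ → ℝ := fun y =>
    ∑ x ∈ Finset.HasAntidiagonal.antidiagonal n,
      PowerSeries.coeff y.1 f * PowerSeries.coeff y.2 g *
        (PowerSeries.coeff x.1 (L ^ y.1) * PowerSeries.coeff x.2 (L ^ y.2)) with hT
  have lhs_eq : ∑ k ∈ range (n+1), PowerSeries.coeff k (f*g) * PowerSeries.coeff n (L^k)
      = ∑ k ∈ range (n+1), ∑ y ∈ Finset.HasAntidiagonal.antidiagonal k, T y := by
    refine Finset.sum_congr rfl fun k _ => ?_
    rw [PowerSeries.coeff_mul, Finset.sum_mul]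
    refine Finset.sum_congr rfl fun y hy => ?_
    have hk : y.1 + y.2 = k := Finset.HasAntidiagonal.mem_antidiagonal.mp hy
    rw [hT]
    simp only
    rw [← Finset.mul_sum, ← PowerSeries.coeff_mul, ← pow_add, hk]
  have hdisj : (↑(range (n+1)) : Set ℕ).PairwiseDisjoint Finset.HasAntidiagonal.antidiagonal := by
    intro a _ b _ hab
    simp only [Function.onFun]
    rw [Finset.disjoint_left]
    intro y hya hyb
    exact hab ((Finset.HasAntidiagonal.mem_antidiagonal.mp hya).symm.trans (Finset.HasAntidiagonal.mem_antidiagonal.mp hyb))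
  have hsub : (range (n+1)).biUnion Finset.HasAntidiagonal.antidiagonal ⊆ range (n+1) ×ˢ range (n+1) := by
    intro y hy
    obtain ⟨k, hk, hyk⟩ := Finset.mem_biUnion.mp hy
    have h1 := Finset.HasAntidiagonal.mem_antidiagonal.mp hyk
    have h2 := Finset.mem_range.mp hk
    rw [Finset.mem_product, Finset.mem_range, Finset.mem_range]
    omega
  have hzero : ∀ y ∈ range (n+1) ×ˢ range (n+1),
      y ∉ (range (n+1)).biUnion Finset.HasAntidiagonal.antidiagonal → T y = 0 := by
    intro y _ hy
    have hgt : n < y.1 + y.2 := by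
      by_contra hle
      exact hy (Finset.mem_biUnion.mpr ⟨y.1 + y.2, Finset.mem_range.mpr (by omega),
        Finset.HasAntidiagonal.mem_antidiagonal.mpr rfl⟩)
    rw [hT]
    refine Finset.sum_eq_zero fun x hx => ?_
    have hxn : x.1 + x.2 = n := Finset.HasAntidiagonal.mem_antidiagonal.mp hx
    rcases (by omega : x.1 < y.1 ∨ x.2 < y.2) with h | h
    · rw [hv _ _ h]; ring
    · rw [hv _ _ h]; ring
  rw [lhs_eq, ← Finset.sum_biUnion hdisj, Finset.sum_subset hsub hzero]
  simp only [hT]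
  rw [Finset.sum_comm]
  refine Finset.sum_congr rfl fun x hx => ?_
  have hx1 : x.1 ≤ n := by
    have := Finset.HasAntidiagonal.mem_antidiagonal.mp hx; omega
  have hx2 : x.2 ≤ n := by
    have := Finset.HasAntidiagonal.mem_antidiagonal.mp hx; omega
  have e1 : (∑ i ∈ range (x.1+1), PowerSeries.coeff i f * PowerSeries.coeff x.1 (L^i))
      = ∑ i ∈ range (n+1), PowerSeries.coeff i f * PowerSeries.coeff x.1 (L^i) := by
    refine Finset.sum_subset (Finset.range_subset_range.mpr (by omega)) fun i _ hi => ?_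
    have : x.1 < i := by
      rcases Nat.lt_or_ge x.1 i with h | h
      · exact h
      · exact absurd (Finset.mem_range.mpr (by omega)) hi
    rw [hv _ _ this]; ring
  have e2 : (∑ j ∈ range (x.2+1), PowerSeries.coeff j g * PowerSeries.coeff x.2 (L^j))
      = ∑ j ∈ range (n+1), PowerSeries.coeff j g * PowerSeries.coeff x.2 (L^j) := by
    refine Finset.sum_subset (Finset.range_subset_range.mpr (by omega)) fun j _ hj => ?_
    have : x.2 < j := by
      rcases Nat.lt_or_ge x.2 j with h | h
      · exact h
      · exact absurd (Finset.mem_range.mpr (by omega)) hj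
    rw [hv _ _ this]; ring
  rw [e1, e2, Finset.sum_mul_sum, Finset.sum_product]
  refine Finset.sum_congr rfl fun i _ => Finset.sum_congr rfl fun j _ => ?_
  ring

lemma stepA (l : ℝ) (q : ℕ) :
    ∑ j ∈ range (q+1), PowerSeries.coeff j (degExp l 1 - 1) * PowerSeries.coeff q (degLog l ^ j)
      = if q = 1 then 1 else 0 := by
  have hsplit : ∀ j, PowerSeries.coeff j (degExp l 1 - 1)
      = dfall l 1 j / (j ! : ℝ) - (if j = 0 then 1 else 0) := by
    intro j
    rw [map_sub, PowerSeries.coeff_one, degExp, PowerSeries.coeff_mk]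
  simp only [hsplit, sub_mul]
  rw [Finset.sum_sub_distrib, cL]
  have : ∑ j ∈ range (q+1), (if j = 0 then (1:ℝ) else 0) * PowerSeries.coeff q (degLog l ^ j)
      = PowerSeries.coeff q (degLog l ^ 0) := by
    rw [Finset.sum_eq_single 0]
    · simp
    · intro b _ hb; simp [hb]
    · intro h; exact absurd (Finset.mem_range.mpr (by omega)) h
  rw [this, pow_zero, PowerSeries.coeff_one]
  rcases q with _ | q
  · norm_num
  · rcases q with _ | q <;> simp
lemma stepB (l : ℝ) (m : ℕ) : ∀ N : ℕ,
    ∑ k ∈ range (N+1), PowerSeries.coeff k ((degExp l 1 - 1)^m) * PowerSeries.coeff N (degLog l ^ k)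
      = if N = m then 1 else 0 := by
  have hv : ∀ k p : ℕ, p < k → PowerSeries.coeff p (degLog l ^ k) = 0 :=
    fun k p h => vanish (constantCoeff_degLog l) h
  induction m with
  | zero =>
    intro N
    simp only [pow_zero, PowerSeries.coeff_one]
    rw [Finset.sum_eq_single 0]
    · rcases N with _ | N
      · simp
      · simp [PowerSeries.coeff_one]
    · intro b _ hb; simp [hb]
    · intro h; exact absurd (Finset.mem_range.mpr (by omega)) h
  | succ m ih =>
    intro N
    rw [pow_succ, conv (degLog l) _ _ hv N]
    have : ∀ x ∈ Finset.HasAntidiagonal.antidiagonal N,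
        (∑ i ∈ range (x.1+1), PowerSeries.coeff i ((degExp l 1 - 1)^m) * PowerSeries.coeff x.1 (degLog l ^ i))
        * (∑ j ∈ range (x.2+1), PowerSeries.coeff j (degExp l 1 - 1) * PowerSeries.coeff x.2 (degLog l ^ j))
        = (if x.1 = m then (1:ℝ) else 0) * (if x.2 = 1 then 1 else 0) := by
      intro x _
      rw [ih x.1, stepA l x.2]
    rw [Finset.sum_congr rfl this, Finset.Nat.sum_antidiagonal_eq_sum_range_succ_mk]
    rw [Finset.sum_eq_single m]
    · by_cases hm : m ≤ N
      · simp only [if_pos rfl, one_mul]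
        by_cases h1 : N - m = 1
        · rw [if_pos h1, if_pos (show N = m + 1 by omega)]; norm_num
        · rw [if_neg h1, if_neg (show ¬ N = m + 1 by omega)]; norm_num
      · simp only [if_pos rfl, one_mul]
        rw [if_neg (show ¬ N - m = 1 by omega), if_neg (show ¬ N = m + 1 by omega)]; norm_num
    · intro b _ hb; simp [hb]
    · intro h
      have hm : ¬ m < N + 1 := fun hc => h (Finset.mem_range.mpr hc)
      have h2 : N - m ≠ 1 := by omega
      simp [h2]


lemma degExp_zero (l : ℝ) : degExp l 0 = 1 := by
  ext m
  rw [degExp, PowerSeries.coeff_mk, PowerSeries.coeff_one]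
  rcases m with _ | p
  · simp [dfall]
  · have h : dfall l 0 (p+1) = 0 := by
      rw [dfall]
      exact Finset.prod_eq_zero (Finset.mem_range.mpr (Nat.succ_pos p)) (by norm_num)
    simp [h]

lemma constantCoeff_degExpE (l : ℝ) :
    PowerSeries.constantCoeff (degExp l 1 - 1) = 0 := by
  rw [map_sub, ← PowerSeries.coeff_zero_eq_constantCoeff_apply, degExp, PowerSeries.coeff_mk]
  simp [dfall]

theorem stmt7 (l : ℝ) (hl : l ≠ 0) (r : ℤ) (n : ℕ) (x : ℝ) :
    dPolyBell r l n x =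
      ∑ k ∈ range (n + 1),
        (∑ j ∈ Icc k n, n.choose j * dS1 l j k * dPolyBell r l (n - j) 0) * dBell l k x := by
  classical
  have hvL : ∀ k p : ℕ, p < k → PowerSeries.coeff p (degLog l ^ k) = 0 :=
    fun k p h => vanish (constantCoeff_degLog l) h
  have hvE : ∀ k p : ℕ, p < k → PowerSeries.coeff p ((degExp l 1 - 1) ^ k) = 0 :=
    fun k p h => vanish (constantCoeff_degExpE l) h
  simp only [dPolyBell]
  set A := divT (psComp (fun k => if k = 0 then 0 else dfall l 1 k / ((k - 1)! * (k : ℝ) ^ r))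
      (degLog l)) * (divT (degExp l 1 - 1))⁻¹ with hA
  have hB : ∀ m, (m ! : ℝ) * PowerSeries.coeff m (A * degExp l 0)
      = (m ! : ℝ) * PowerSeries.coeff m A := by
    intro m
    rw [degExp_zero, mul_one]
  have R1 : ∀ k ∈ range (n+1),
      (∑ j ∈ Icc k n, (n.choose j : ℝ) * dS1 l j k *
          ((((n-j)! : ℕ) : ℝ) * PowerSeries.coeff (n-j) (A * degExp l 0)))
        = (n ! : ℝ) / k ! * PowerSeries.coeff n (degLog l ^ k * A) := by
    intro k hk
    have hkn : k ≤ n := by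
      have := Finset.mem_range.mp hk; omega
    have hIcc : Icc k n ⊆ range (n+1) := by
      intro j hj
      have := Finset.mem_Icc.mp hj
      exact Finset.mem_range.mpr (by omega)
    rw [Finset.sum_subset hIcc (by
      intro j hj hnj
      have hj1 := Finset.mem_range.mp hj
      have hjk : j < k := by
        rcases Nat.lt_or_ge j k with h | h
        · exact h
        · exact absurd (Finset.mem_Icc.mpr ⟨h, by omega⟩) hnj
      rw [dS1, hvL k j hjk]
      ring)]
    calc ∑ j ∈ range (n+1), (n.choose j : ℝ) * dS1 l j k *
            ((((n-j)! : ℕ) : ℝ) * PowerSeries.coeff (n-j) (A * degExp l 0))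
        = ∑ j ∈ range (n+1), (n ! : ℝ) / k ! *
            (PowerSeries.coeff j (degLog l ^ k) * PowerSeries.coeff (n-j) A) := by
          refine Finset.sum_congr rfl fun j hj => ?_
          have hjn : j ≤ n := by
            have := Finset.mem_range.mp hj; omega
          rw [hB, dS1]
          have hfac : ((n.choose j : ℕ) : ℝ) * (j ! : ℝ) * (((n-j)! : ℕ) : ℝ) = (n ! : ℝ) := by
            exact_mod_cast congrArg (Nat.cast (R := ℝ))
              (Nat.choose_mul_factorial_mul_factorial hjn)
          linear_combination (PowerSeries.coeff j (degLog l ^ k) *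
            PowerSeries.coeff (n-j) A * ((k ! : ℝ))⁻¹) * hfac
      _ = (n ! : ℝ) / k ! * PowerSeries.coeff n (degLog l ^ k * A) := by
          rw [← Finset.mul_sum, PowerSeries.coeff_mul,
            Finset.Nat.sum_antidiagonal_eq_sum_range_succ_mk]
  have R4 : ∀ m ≤ n,
      ∑ k ∈ range (n+1), PowerSeries.coeff k ((degExp l 1 - 1) ^ m) *
          PowerSeries.coeff n (degLog l ^ k * A)
        = PowerSeries.coeff (n-m) A := by
    intro m hm
    have e1 : ∀ k, PowerSeries.coeff n (degLog l ^ k * A)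
        = ∑ p ∈ range (n+1), PowerSeries.coeff p (degLog l ^ k) *
            PowerSeries.coeff (n-p) A := by
      intro k
      rw [PowerSeries.coeff_mul, Finset.Nat.sum_antidiagonal_eq_sum_range_succ_mk]
    simp only [e1]
    calc ∑ k ∈ range (n+1), PowerSeries.coeff k ((degExp l 1 - 1) ^ m) *
            ∑ p ∈ range (n+1), PowerSeries.coeff p (degLog l ^ k) *
              PowerSeries.coeff (n-p) A
        = ∑ p ∈ range (n+1), (∑ k ∈ range (n+1),
            PowerSeries.coeff k ((degExp l 1 - 1) ^ m) *
              PowerSeries.coeff p (degLog l ^ k)) * PowerSeries.coeff (n-p) A := by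
          simp only [Finset.mul_sum]
          rw [Finset.sum_comm]
          refine Finset.sum_congr rfl fun p _ => ?_
          rw [Finset.sum_mul]
          exact Finset.sum_congr rfl fun k _ => by ring
      _ = ∑ p ∈ range (n+1), (if p = m then (1:ℝ) else 0) * PowerSeries.coeff (n-p) A := by
          refine Finset.sum_congr rfl fun p hp => ?_
          have hpn : p ≤ n := by
            have := Finset.mem_range.mp hp; omega
          congr 1
          rw [← Finset.sum_subset (Finset.range_subset_range.mpr (show p+1 ≤ n+1 by omega)) (by
            intro k hk hnk
            have : p < k := by
              rcases Nat.lt_or_ge p k with h | h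
              · exact h
              · exact absurd (Finset.mem_range.mpr (by omega)) hnk
            rw [hvL k p this, mul_zero])]
          exact stepB l m p
      _ = PowerSeries.coeff (n-m) A := by
          rw [Finset.sum_eq_single m]
          · simp
          · intro b _ hb; simp [hb]
          · intro h; exact absurd (Finset.mem_range.mpr (by omega)) h
  have RHSeq : ∑ k ∈ range (n+1),
        (∑ j ∈ Icc k n, (n.choose j : ℝ) * dS1 l j k *
          ((((n-j)! : ℕ) : ℝ) * PowerSeries.coeff (n-j) (A * degExp l 0))) * dBell l k x
      = ∑ m ∈ range (n+1), (n ! : ℝ) / m ! * dfall l x m * PowerSeries.coeff (n-m) A := by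
    calc ∑ k ∈ range (n+1),
          (∑ j ∈ Icc k n, (n.choose j : ℝ) * dS1 l j k *
            ((((n-j)! : ℕ) : ℝ) * PowerSeries.coeff (n-j) (A * degExp l 0))) * dBell l k x
        = ∑ k ∈ range (n+1), ∑ m ∈ range (n+1),
            (n ! : ℝ) / m ! * dfall l x m *
              (PowerSeries.coeff k ((degExp l 1 - 1) ^ m) *
                PowerSeries.coeff n (degLog l ^ k * A)) := by
          refine Finset.sum_congr rfl fun k hk => ?_
          have hkn : k ≤ n := by
            have := Finset.mem_range.mp hk; omega
          rw [R1 k hk, dBell, Finset.mul_sum]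
          rw [Finset.sum_subset (Finset.range_subset_range.mpr (show k+1 ≤ n+1 by omega)) (by
            intro m hm hnm
            have hmk : k < m := by
              rcases Nat.lt_or_ge k m with h | h
              · exact h
              · exact absurd (Finset.mem_range.mpr (by omega)) hnm
            rw [dS2, hvE m k hmk]
            ring)]
          refine Finset.sum_congr rfl fun m hm => ?_
          rw [dS2]
          have hk0 : (k ! : ℝ) ≠ 0 := by positivity
          have hm0 : (m ! : ℝ) ≠ 0 := by positivity
          field_simp
      _ = ∑ m ∈ range (n+1), (n ! : ℝ) / m ! * dfall l x m *
            ∑ k ∈ range (n+1), PowerSeries.coeff k ((degExp l 1 - 1) ^ m) *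
              PowerSeries.coeff n (degLog l ^ k * A) := by
          rw [Finset.sum_comm]
          exact Finset.sum_congr rfl fun m _ => by rw [Finset.mul_sum]
      _ = ∑ m ∈ range (n+1), (n ! : ℝ) / m ! * dfall l x m *
            PowerSeries.coeff (n-m) A := by
          refine Finset.sum_congr rfl fun m hm => ?_
          rw [R4 m (by have := Finset.mem_range.mp hm; omega)]
  have LHSeq : (n ! : ℝ) * PowerSeries.coeff n (A * degExp l x)
      = ∑ m ∈ range (n+1), (n ! : ℝ) / m ! * dfall l x m * PowerSeries.coeff (n-m) A := by
    rw [mul_comm A, PowerSeries.coeff_mul, Finset.Nat.sum_antidiagonal_eq_sum_range_succ_mk,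
      Finset.mul_sum]
    refine Finset.sum_congr rfl fun m _ => ?_
    rw [degExp, PowerSeries.coeff_mk]
    ring
  exact LHSeq.trans RHSeq.symm

end
end

section
/- Let λ be a nonzero real number and m a positive integer. For every n ≥ 0, the identity (x)_{n,λ} = Σ_{k=0}^{n} { Σ_{l=k}^{n} Σ_{i=0}^{n−l} C(n,l) S_{1,λ/m}(l,k) S_1(n−l,i) m^{n−k−i} (−1)^i } d_{m,λ}(k,x) holds as polynomials in x, where C(n,l) is the binomial coefficient. -/
open Nat PowerSeries Finset

noncomputable section

section AuxLemmas

/-- substitution of `f` into `A`. -/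
def scomp (A f : PowerSeries ℝ) : PowerSeries ℝ := psComp (fun k => coeff k A) f

lemma coeff_pow_eq_zero {f : PowerSeries ℝ} (hf : constantCoeff f = 0)
    {k n : ℕ} (h : n < k) : coeff n (f ^ k) = 0 := by
  obtain ⟨g, rfl⟩ := PowerSeries.X_dvd_iff.mpr hf
  rw [mul_pow, PowerSeries.coeff_mul]
  refine Finset.sum_eq_zero fun p hp => ?_
  have h1 : p.1 ≤ n := Finset.HasAntidiagonal.antidiagonal.fst_le hp
  rw [PowerSeries.coeff_X_pow, if_neg (by omega), zero_mul]

lemma coeff_scomp (A f : PowerSeries ℝ) (n : ℕ) :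
    coeff n (scomp A f) = ∑ k ∈ range (n + 1), coeff k A * coeff n (f ^ k) := by
  simp [scomp, psComp, coeff_mk]

lemma coeff_scomp_of_le {f : PowerSeries ℝ} (hf : constantCoeff f = 0)
    (A : PowerSeries ℝ) {n N : ℕ} (hN : n + 1 ≤ N) :
    coeff n (scomp A f) = ∑ k ∈ range N, coeff k A * coeff n (f ^ k) := by
  rw [coeff_scomp]
  refine Finset.sum_subset (Finset.range_subset_range.mpr hN) fun k _ hk => ?_
  rw [coeff_pow_eq_zero hf (by simpa using hk), mul_zero]

lemma scomp_add (A B f : PowerSeries ℝ) : scomp (A + B) f = scomp A f + scomp B f := by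
  ext n
  simp [coeff_scomp, add_mul, Finset.sum_add_distrib]

lemma scomp_neg (A f : PowerSeries ℝ) : scomp (-A) f = - scomp A f := by
  ext n
  simp [coeff_scomp, Finset.sum_neg_distrib]

lemma scomp_sub (A B f : PowerSeries ℝ) : scomp (A - B) f = scomp A f - scomp B f := by
  rw [sub_eq_add_neg, scomp_add, scomp_neg, sub_eq_add_neg]

lemma scomp_C (c : ℝ) (f : PowerSeries ℝ) : scomp (C c) f = C c := by
  ext n
  rw [coeff_scomp, Finset.sum_eq_single 0]
  · simp [PowerSeries.coeff_C]
  · intro k _ hk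
    simp [PowerSeries.coeff_C, hk]
  · simp

lemma scomp_one (f : PowerSeries ℝ) : scomp 1 f = 1 := by
  simpa using scomp_C 1 f

lemma scomp_X {f : PowerSeries ℝ} (hf : constantCoeff f = 0) : scomp X f = f := by
  ext n
  rw [coeff_scomp]
  rcases n with _ | n
  · simpa [PowerSeries.coeff_X] using hf.symm
  · rw [Finset.sum_eq_single 1]
    · simp
    · intro k _ hk
      simp [PowerSeries.coeff_X, hk]
    · simp

lemma scomp_X_right (A : PowerSeries ℝ) : scomp A X = A := by
  ext n
  rw [coeff_scomp, Finset.sum_eq_single n]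
  · simp
  · intro k _ hk
    rw [PowerSeries.coeff_X_pow, if_neg (fun h => hk h.symm), mul_zero]
  · simp

lemma scomp_rescale (c : ℝ) (A f : PowerSeries ℝ) :
    scomp (rescale c A) f = scomp A (C c * f) := by
  ext n
  rw [coeff_scomp, coeff_scomp]
  refine Finset.sum_congr rfl fun k _ => ?_
  rw [coeff_rescale, mul_pow, ← map_pow, coeff_C_mul]
  ring

lemma coeff_mul_scomp {f : PowerSeries ℝ} (hf : constantCoeff f = 0)
    (E A : PowerSeries ℝ) (n : ℕ) :
    coeff n (E * scomp A f) =
      ∑ k ∈ range (n + 1), coeff k A * coeff n (E * f ^ k) := by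
  rw [PowerSeries.coeff_mul]
  have h1 : ∀ p ∈ Finset.HasAntidiagonal.antidiagonal n,
      coeff p.1 E * coeff p.2 (scomp A f) =
        ∑ k ∈ range (n + 1), coeff k A * (coeff p.1 E * coeff p.2 (f ^ k)) := by
    intro p hp
    have h2 : p.2 ≤ n := Finset.HasAntidiagonal.antidiagonal.snd_le hp
    rw [coeff_scomp_of_le hf A (N := n + 1) (by omega), Finset.mul_sum]
    refine Finset.sum_congr rfl fun k _ => by ring
  rw [Finset.sum_congr rfl h1, Finset.sum_comm]
  refine Finset.sum_congr rfl fun k _ => ?_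
  rw [PowerSeries.coeff_mul, Finset.mul_sum]


lemma scomp_mul {f : PowerSeries ℝ} (hf : constantCoeff f = 0) (A B : PowerSeries ℝ) :
    scomp (A * B) f = scomp A f * scomp B f := by
  ext n
  have hR : coeff n (scomp A f * scomp B f) =
      ∑ q ∈ range (n + 1) ×ˢ range (n + 1),
        coeff q.1 A * coeff q.2 B * coeff n (f ^ (q.1 + q.2)) := by
    rw [PowerSeries.coeff_mul]
    have h1 : ∀ p ∈ Finset.HasAntidiagonal.antidiagonal n,
        coeff p.1 (scomp A f) * coeff p.2 (scomp B f) =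
          ∑ q ∈ range (n + 1) ×ˢ range (n + 1),
            coeff q.1 A * coeff q.2 B * (coeff p.1 (f ^ q.1) * coeff p.2 (f ^ q.2)) := by
      intro p hp
      have h2 : p.1 ≤ n := Finset.HasAntidiagonal.antidiagonal.fst_le hp
      have h3 : p.2 ≤ n := Finset.HasAntidiagonal.antidiagonal.snd_le hp
      rw [coeff_scomp_of_le hf A (N := n + 1) (by omega),
        coeff_scomp_of_le hf B (N := n + 1) (by omega), Finset.sum_mul_sum,
        ← Finset.sum_product']
      exact Finset.sum_congr rfl fun q _ => by ring
    rw [Finset.sum_congr rfl h1, Finset.sum_comm]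
    refine Finset.sum_congr rfl fun q _ => ?_
    rw [← Finset.mul_sum, ← PowerSeries.coeff_mul, ← pow_add]
  rw [hR, coeff_scomp]
  have h4 : ∀ s ∈ range (n + 1), coeff s (A * B) * coeff n (f ^ s) =
      ∑ p ∈ Finset.HasAntidiagonal.antidiagonal s,
        coeff p.1 A * coeff p.2 B * coeff n (f ^ (p.1 + p.2)) := by
    intro s _
    rw [PowerSeries.coeff_mul, Finset.sum_mul]
    exact Finset.sum_congr rfl fun p hp => by
      rw [Finset.HasAntidiagonal.mem_antidiagonal] at hp; rw [hp]
  rw [Finset.sum_congr rfl h4, Finset.sum_sigma']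
  rw [← Finset.sum_filter_of_ne (p := fun q : ℕ × ℕ => q.1 + q.2 ≤ n)
    (fun q _ hq => by
      by_contra h
      exact hq (by rw [coeff_pow_eq_zero hf (by omega), mul_zero]))]
  refine Finset.sum_nbij' (fun q => (q.2.1, q.2.2)) (fun p => ⟨p.1 + p.2, p⟩) ?_ ?_ ?_ ?_ ?_
  · rintro ⟨s, p⟩ hq
    simp only [Finset.mem_sigma, Finset.mem_range, Finset.HasAntidiagonal.mem_antidiagonal] at hq
    simp only [Finset.mem_filter, Finset.mem_product, Finset.mem_range]
    omega
  · rintro ⟨i, j⟩ hp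
    simp only [Finset.mem_filter, Finset.mem_product, Finset.mem_range] at hp
    rw [Finset.mem_sigma]
    exact ⟨by simp; omega, by simp⟩
  · rintro ⟨s, p⟩ hq
    simp only [Finset.mem_sigma, Finset.mem_range, Finset.HasAntidiagonal.mem_antidiagonal] at hq
    simp [hq.2]
  · rintro ⟨i, j⟩ _
    rfl
  · rintro ⟨s, p⟩ _
    rfl

lemma scomp_pow {f : PowerSeries ℝ} (hf : constantCoeff f = 0) (A : PowerSeries ℝ) (k : ℕ) :
    scomp (A ^ k) f = scomp A f ^ k := by
  induction k with
  | zero => simpa using scomp_C 1 f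
  | succ k ih => rw [pow_succ, scomp_mul hf, ih, pow_succ]


lemma dfall_zero (l x : ℝ) : dfall l x 0 = 1 := by simp [dfall]

lemma dfall_succ (l x : ℝ) (n : ℕ) : dfall l x (n + 1) = dfall l x n * (x - n * l) :=
  Finset.prod_range_succ _ _

lemma dfall_add (l x y : ℝ) (n : ℕ) :
    dfall l (x + y) n =
      ∑ k ∈ range (n + 1), (n.choose k : ℝ) * dfall l x k * dfall l y (n - k) := by
  induction n with
  | zero => simp [dfall]
  | succ n ih =>
    have step : ∀ k ∈ range (n + 1),
        (n.choose k : ℝ) * dfall l x k * dfall l y (n - k) * (x + y - n * l) =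
          (n.choose k : ℝ) * dfall l x k * dfall l y (n + 1 - k)
            + (n.choose k : ℝ) * dfall l x (k + 1) * dfall l y (n - k) := by
      intro k hk
      have hk' : k ≤ n := by simpa [Nat.lt_succ_iff] using hk
      have h1 : dfall l y (n + 1 - k) = dfall l y (n - k) * (y - (n - k : ℕ) * l) := by
        rw [show n + 1 - k = (n - k) + 1 by omega, dfall_succ]
      have h3 : ((n - k : ℕ) : ℝ) = (n : ℝ) - k := by
        push_cast [Nat.cast_sub hk']; ring
      rw [h1, dfall_succ, h3]
      ring
    have lhs : dfall l (x + y) (n + 1) =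
        ∑ k ∈ range (n + 1), (n.choose k : ℝ) * dfall l x k * dfall l y (n - k) *
          (x + y - n * l) := by
      rw [dfall_succ, ih, Finset.sum_mul]
    rw [lhs, Finset.sum_congr rfl step, Finset.sum_add_distrib]
    have h6 : ∀ k ∈ range (n + 1),
        ((n + 1).choose (k + 1) : ℝ) * dfall l x (k + 1) * dfall l y (n + 1 - (k + 1)) =
          (n.choose k : ℝ) * dfall l x (k + 1) * dfall l y (n - k)
            + (n.choose (k + 1) : ℝ) * dfall l x (k + 1) * dfall l y (n - k) := by
      intro k _
      rw [Nat.succ_sub_succ, Nat.choose_succ_succ]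
      push_cast
      ring
    have e6 : ∑ k ∈ range (n + 1),
        ((n + 1).choose (k + 1) : ℝ) * dfall l x (k + 1) * dfall l y (n + 1 - (k + 1)) =
          (∑ k ∈ range (n + 1), (n.choose k : ℝ) * dfall l x (k + 1) * dfall l y (n - k))
            + ∑ k ∈ range (n + 1), (n.choose (k + 1) : ℝ) * dfall l x (k + 1) *
                dfall l y (n - k) := by
      rw [Finset.sum_congr rfl h6, Finset.sum_add_distrib]
    have e2 := Finset.sum_range_succ' (fun k => (((n + 1).choose k : ℝ)) * dfall l x k *
      dfall l y (n + 1 - k)) (n + 1)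
    have e4 := Finset.sum_range_succ' (fun k => ((n.choose k : ℝ)) * dfall l x k *
      dfall l y (n + 1 - k)) (n + 1)
    rw [Finset.sum_range_succ, Nat.choose_eq_zero_of_lt (show n < n + 1 by omega)] at e4
    have e5 : ∀ k ∈ range (n + 1),
        (n.choose (k + 1) : ℝ) * dfall l x (k + 1) * dfall l y (n + 1 - (k + 1)) =
          (n.choose (k + 1) : ℝ) * dfall l x (k + 1) * dfall l y (n - k) := by
      intro k _
      rw [Nat.succ_sub_succ]
    rw [Finset.sum_congr rfl e5] at e4
    simp only [Nat.choose_zero_right, Nat.cast_one, one_mul, Nat.sub_zero, Nat.cast_zero,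
      zero_mul, add_zero] at e2 e4 ⊢
    linarith [e2, e4, e6]


lemma coeff_degExp (l x : ℝ) (n : ℕ) : coeff n (degExp l x) = dfall l x n / n ! := by
  simp [degExp, coeff_mk]

lemma degExp_mul (l x y : ℝ) : degExp l x * degExp l y = degExp l (x + y) := by
  ext n
  rw [PowerSeries.coeff_mul, Finset.Nat.sum_antidiagonal_eq_sum_range_succ_mk, coeff_degExp,
    dfall_add, Finset.sum_div]
  refine Finset.sum_congr rfl fun k hk => ?_
  have hk' : k ≤ n := by simpa [Nat.lt_succ_iff] using hk
  rw [coeff_degExp, coeff_degExp, Nat.cast_choose ℝ hk']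
  have h1 : (k ! : ℝ) ≠ 0 := by positivity
  have h2 : ((n - k)! : ℝ) ≠ 0 := by positivity
  have h3 : (n ! : ℝ) ≠ 0 := by positivity
  field_simp

lemma dfall_zero_left (l : ℝ) (n : ℕ) : dfall l 0 n = if n = 0 then 1 else 0 := by
  cases n with
  | zero => simp [dfall]
  | succ n =>
    rw [if_neg (by omega)]
    exact Finset.prod_eq_zero (Finset.mem_range.mpr (Nat.succ_pos n)) (by norm_num)

lemma degExp_pow (l x : ℝ) (N : ℕ) : degExp l x ^ N = degExp l (N * x) := by
  induction N with
  | zero => simp [degExp_zero]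
  | succ N ih =>
    rw [pow_succ, ih, degExp_mul]
    push_cast
    ring_nf

lemma degExp_one_one : degExp 1 1 = 1 + X := by
  ext n
  rw [coeff_degExp, map_add, PowerSeries.coeff_one, PowerSeries.coeff_X]
  match n with
  | 0 => simp [dfall]
  | 1 => simp [dfall]
  | (n + 2) =>
    have : dfall 1 1 (n + 2) = 0 := by
      refine Finset.prod_eq_zero (i := 1) (Finset.mem_range.mpr (by omega)) (by norm_num)
    simp [this]

lemma B_nat (N : ℕ) : degExp 1 (N : ℝ) = (1 + X) ^ N := by
  induction N with
  | zero =>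
    rw [Nat.cast_zero, degExp_zero, pow_zero]
  | succ N ih =>
    rw [pow_succ, ← ih, ← degExp_one_one, degExp_mul]
    push_cast
    ring_nf

lemma dfall_scale (c a : ℝ) (n : ℕ) : dfall c (a * c) n = c ^ n * dfall 1 a n := by
  rw [dfall, dfall]
  calc ∏ i ∈ range n, (a * c - i * c) = ∏ i ∈ range n, (c * (a - i * 1)) :=
        Finset.prod_congr rfl fun i _ => by ring
    _ = (∏ _i ∈ range n, c) * ∏ i ∈ range n, (a - i * 1) := Finset.prod_mul_distrib
    _ = c ^ n * ∏ i ∈ range n, (a - i * 1) := by rw [Finset.prod_const, Finset.card_range]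

lemma rescale_degExp (c a : ℝ) : rescale c (degExp 1 a) = degExp c (a * c) := by
  ext n
  rw [coeff_rescale, coeff_degExp, coeff_degExp, dfall_scale]
  ring

lemma degLog_eq {μ : ℝ} (hμ : μ ≠ 0) : degLog μ = C (1 / μ) * (degExp 1 μ - 1) := by
  ext n
  rw [coeff_C_mul, map_sub, coeff_degExp, PowerSeries.coeff_one]
  cases n with
  | zero => simp [degLog, dfall]
  | succ n =>
    have h1 : dfall 1 μ (n + 1) = (∏ j ∈ range n, (μ - (j + 1))) * μ := by
      rw [dfall, Finset.prod_range_succ']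
      simp [mul_one]
    rw [degLog, coeff_mk, if_neg (by omega), if_neg (by omega), h1]
    have h3 : ((n + 1)! : ℝ) ≠ 0 := by positivity
    have h4 : n + 1 - 1 = n := by omega
    rw [h4]
    field_simp
    simp

lemma desc_eval (b : ℝ) (k : ℕ) : (descPochhammer ℝ k).eval b = dfall 1 b k := by
  induction k with
  | zero => simp [descPochhammer, dfall]
  | succ k ih =>
    rw [descPochhammer_succ_eval, ih, dfall_succ, mul_one]

lemma constCoeff_rescale_degExp (c a : ℝ) :
    constantCoeff (rescale c (degExp 1 a)) = 1 := by
  rw [← PowerSeries.coeff_zero_eq_constantCoeff, coeff_rescale, coeff_degExp]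
  simp [dfall]

lemma scomp_B (c a b : ℝ) :
    scomp (degExp 1 b) (rescale c (degExp 1 a) - 1) = rescale c (degExp 1 (a * b)) := by
  set g := rescale c (degExp 1 a) - 1 with hgdef
  have hg : constantCoeff g = 0 := by
    rw [hgdef, map_sub, constCoeff_rescale_degExp, map_one, sub_self]
  ext n
  have main : ∀ y : ℝ, coeff n (scomp (degExp 1 y) g) =
      Polynomial.eval y (∑ k ∈ range (n + 1),
        Polynomial.C (coeff n (g ^ k) / k !) * descPochhammer ℝ k) := by
    intro y
    rw [Polynomial.eval_finset_sum, coeff_scomp]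
    refine Finset.sum_congr rfl fun k _ => ?_
    rw [Polynomial.eval_mul, Polynomial.eval_C, desc_eval, coeff_degExp]
    ring
  have mainq : ∀ y : ℝ, coeff n (rescale c (degExp 1 (a * y))) =
      Polynomial.eval y (Polynomial.C (c ^ n / n !) *
        (descPochhammer ℝ n).comp (Polynomial.C a * Polynomial.X)) := by
    intro y
    rw [Polynomial.eval_mul, Polynomial.eval_C, Polynomial.eval_comp, Polynomial.eval_mul,
      Polynomial.eval_C, Polynomial.eval_X, desc_eval, coeff_rescale, coeff_degExp]
    ring
  have hNat : ∀ N : ℕ, coeff n (scomp (degExp 1 (N : ℝ)) g) =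
      coeff n (rescale c (degExp 1 (a * N))) := by
    intro N
    have h1 : scomp (degExp 1 (N : ℝ)) g = (1 + g) ^ N := by
      rw [B_nat, scomp_pow hg, scomp_add, scomp_one, scomp_X hg]
    have h2 : (1 : PowerSeries ℝ) + g = rescale c (degExp 1 a) := by
      rw [hgdef]; ring
    rw [h1, h2, ← map_pow, degExp_pow]
    norm_num [mul_comm]
  have hpq : (∑ k ∈ range (n + 1),
        Polynomial.C (coeff n (g ^ k) / k !) * descPochhammer ℝ k) =
      Polynomial.C (c ^ n / n !) *
        (descPochhammer ℝ n).comp (Polynomial.C a * Polynomial.X) := by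
    refine Polynomial.eq_of_infinite_eval_eq _ _ ?_
    refine Set.infinite_of_injective_forall_mem (f := (Nat.cast : ℕ → ℝ))
      Nat.cast_injective ?_
    intro N
    simp only [Set.mem_setOf_eq]
    rw [← main (N : ℝ), ← mainq (N : ℝ), hNat]
  rw [main b, hpq, ← mainq b]


lemma scomp_assoc {f g : PowerSeries ℝ} (hf : constantCoeff f = 0)
    (hg : constantCoeff g = 0) (A : PowerSeries ℝ) :
    scomp (scomp A g) f = scomp A (scomp g f) := by
  ext n
  rw [coeff_scomp, coeff_scomp]
  have h1 : ∀ k ∈ range (n + 1), coeff k (scomp A g) * coeff n (f ^ k) =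
      ∑ p ∈ range (n + 1), coeff p A * (coeff k (g ^ p) * coeff n (f ^ k)) := by
    intro k hk
    rw [coeff_scomp_of_le hg A (N := n + 1) (by simpa [Nat.lt_succ_iff] using hk),
      Finset.sum_mul]
    exact Finset.sum_congr rfl fun p _ => by ring
  rw [Finset.sum_congr rfl h1, Finset.sum_comm]
  refine Finset.sum_congr rfl fun p _ => ?_
  rw [← scomp_pow hf g p, coeff_scomp, Finset.mul_sum]

lemma rescale_C' (a c : ℝ) : rescale a (C c) = C c := by
  ext n
  rw [coeff_rescale, PowerSeries.coeff_C]
  split_ifs with h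
  · simp [h]
  · simp

lemma constCoeff_degLog (μ : ℝ) : constantCoeff (degLog μ) = 0 := by
  rw [← PowerSeries.coeff_zero_eq_constantCoeff]
  simp [degLog]

section Keys
variable {l : ℝ} {m : ℕ}

lemma hfps0 (l : ℝ) (m : ℕ) :
    constantCoeff (C (1 / (m : ℝ)) * rescale (m : ℝ) (degLog (l / m))) = 0 := by
  rw [map_mul, constantCoeff_C]
  rw [← PowerSeries.coeff_zero_eq_constantCoeff, coeff_rescale,
    PowerSeries.coeff_zero_eq_constantCoeff, constCoeff_degLog]
  ring

lemma hg0 (l : ℝ) (m : ℕ) :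
    constantCoeff ((degExp l (m : ℝ) - 1) * C (1 / (m : ℝ))) = 0 := by
  rw [map_mul, map_sub, map_one, ← PowerSeries.coeff_zero_eq_constantCoeff, coeff_degExp]
  simp [dfall]

lemma Clf (hl : l ≠ 0) (hm : (m : ℝ) ≠ 0) :
    C l * (C (1 / (m : ℝ)) * rescale (m : ℝ) (degLog (l / m))) =
      rescale (m : ℝ) (degExp 1 (l / m)) - 1 := by
  rw [degLog_eq (div_ne_zero hl hm), map_mul, rescale_C', map_sub, map_one,
    ← mul_assoc, ← mul_assoc, ← map_mul, ← map_mul]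
  have h1 : l * (1 / (m : ℝ)) * (1 / (l / m)) = 1 := by field_simp
  rw [h1, map_one, one_mul]

lemma key_expm (hl : l ≠ 0) (hm : (m : ℝ) ≠ 0) :
    scomp (degExp l (m : ℝ)) (C (1 / (m : ℝ)) * rescale (m : ℝ) (degLog (l / m))) =
      1 + C (m : ℝ) * X := by
  have h1 : degExp l (m : ℝ) = rescale l (degExp 1 ((m : ℝ) / l)) := by
    rw [rescale_degExp, div_mul_cancel₀ _ hl]
  rw [h1, scomp_rescale, Clf hl hm, scomp_B]
  have h2 : l / (m : ℝ) * ((m : ℝ) / l) = 1 := by field_simp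
  rw [h2, degExp_one_one, map_add, map_one, rescale_X]

lemma key1 (hl : l ≠ 0) (hm : (m : ℝ) ≠ 0) :
    scomp ((degExp l (m : ℝ) - 1) * C (1 / (m : ℝ)))
      (C (1 / (m : ℝ)) * rescale (m : ℝ) (degLog (l / m))) = X := by
  rw [scomp_mul (hfps0 l m), scomp_sub, scomp_one, scomp_C, key_expm hl hm]
  rw [add_sub_cancel_left, mul_comm, ← mul_assoc, ← map_mul]
  rw [show (1 / (m : ℝ)) * (m : ℝ) = 1 by field_simp, map_one, one_mul]

lemma key2 (hl : l ≠ 0) (hm : (m : ℝ) ≠ 0) :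
    scomp (degExp l 1) (C (1 / (m : ℝ)) * rescale (m : ℝ) (degLog (l / m))) =
      degExp (m : ℝ) 1 := by
  have h1 : degExp l 1 = rescale l (degExp 1 (1 / l)) := by
    rw [rescale_degExp, one_div, inv_mul_cancel₀ hl]
  rw [h1, scomp_rescale, Clf hl hm, scomp_B]
  have h2 : l / (m : ℝ) * (1 / l) = 1 / (m : ℝ) := by
    field_simp
  rw [h2, rescale_degExp, one_div, inv_mul_cancel₀ hm]

lemma main_id (hl : l ≠ 0) (hm : (m : ℝ) ≠ 0) (x : ℝ) :
    degExp l x =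
      degExp (m : ℝ) (-1) *
        scomp (degExp l 1 * scomp (degExp l x) ((degExp l (m : ℝ) - 1) * C (1 / (m : ℝ))))
          (C (1 / (m : ℝ)) * rescale (m : ℝ) (degLog (l / m))) := by
  rw [scomp_mul (hfps0 l m), key2 hl hm, scomp_assoc (hfps0 l m) (hg0 l m), key1 hl hm,
    scomp_X_right, ← mul_assoc, degExp_mul]
  norm_num [degExp_zero]

end Keys

lemma dS1_eq_zero {μ : ℝ} {j k : ℕ} (h : j < k) : dS1 μ j k = 0 := by
  unfold dS1
  rw [coeff_pow_eq_zero (constCoeff_degLog μ) h, mul_zero]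

lemma coeff_fps_pow (l : ℝ) {m : ℕ} (hm : (m : ℝ) ≠ 0) (k j : ℕ) :
    coeff j ((C (1 / (m : ℝ)) * rescale (m : ℝ) (degLog (l / m))) ^ k) =
      (1 / (m : ℝ)) ^ k * (m : ℝ) ^ j * ((k ! : ℝ) / (j ! : ℝ)) * dS1 (l / m) j k := by
  rw [mul_pow, ← map_pow, ← map_pow, coeff_C_mul, coeff_rescale]
  simp only [dS1]
  have hj : (j ! : ℝ) ≠ 0 := by positivity
  have hk : (k ! : ℝ) ≠ 0 := by positivity
  field_simp

lemma coeff_degExp_neg_one {m : ℕ} (hm : (m : ℝ) ≠ 0) (q : ℕ) :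
    coeff q (degExp (m : ℝ) (-1)) =
      (∑ i ∈ range (q + 1), sS1 q i * (-1 : ℝ) ^ i * (m : ℝ) ^ (q - i)) / q ! := by
  rw [coeff_degExp]
  congr 1
  have h1 : dfall (m : ℝ) (-1) q = (m : ℝ) ^ q * dfall 1 (-(1 / (m : ℝ))) q := by
    have h := dfall_scale (m : ℝ) (-(1 / (m : ℝ))) q
    rw [show (-(1 / (m : ℝ))) * (m : ℝ) = -1 by field_simp] at h
    exact h
  rw [h1, ← desc_eval,
    Polynomial.eval_eq_sum_range' (n := q + 1) (by rw [descPochhammer_natDegree]; omega),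
    Finset.mul_sum]
  refine Finset.sum_congr rfl fun i hi => ?_
  have hi' : i ≤ q := by simpa [Nat.lt_succ_iff] using hi
  have e1 : (-(1 / (m : ℝ))) ^ i = (-1 : ℝ) ^ i * (1 / (m : ℝ)) ^ i := by
    rw [← mul_pow]; norm_num
  have e2 : (m : ℝ) ^ i * (1 / (m : ℝ)) ^ i = 1 := by
    rw [← mul_pow, mul_one_div_cancel hm, one_pow]
  have e3 : (m : ℝ) ^ q = (m : ℝ) ^ (q - i) * (m : ℝ) ^ i := by
    rw [← pow_add]
    congr 1
    omega
  calc (m : ℝ) ^ q * ((descPochhammer ℝ q).coeff i * (-(1 / (m : ℝ))) ^ i)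
      = (descPochhammer ℝ q).coeff i * (-1 : ℝ) ^ i * (m : ℝ) ^ (q - i) *
          ((m : ℝ) ^ i * (1 / (m : ℝ)) ^ i) := by rw [e1, e3]; ring
    _ = sS1 q i * (-1 : ℝ) ^ i * (m : ℝ) ^ (q - i) := by rw [e2, mul_one]; rfl

lemma coeff_T (l : ℝ) (m : ℕ) (x : ℝ) (k : ℕ) :
    coeff k (degExp l 1 *
        scomp (degExp l x) ((degExp l (m : ℝ) - 1) * C (1 / (m : ℝ)))) =
      dDowling m l k x / k ! := by
  rw [coeff_mul_scomp (hg0 l m)]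
  simp only [dDowling, dW]
  rw [Finset.sum_div]
  refine Finset.sum_congr rfl fun p _ => ?_
  rw [coeff_degExp]
  have h1 : (p ! : ℝ) ≠ 0 := by positivity
  have h2 : (k ! : ℝ) ≠ 0 := by positivity
  have h3 : (1 : ℝ) / (m : ℕ) = 1 / ((m : ℕ) : ℝ) := by norm_num
  field_simp


end AuxLemmas

theorem stmt11 (l : ℝ) (hl : l ≠ 0) (m : ℕ) (hm : 0 < m) (n : ℕ) (x : ℝ) :
    dfall l x n =
      ∑ k ∈ range (n + 1),
        (∑ j ∈ Icc k n, ∑ i ∈ range (n - j + 1),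
            n.choose j * dS1 (l / m) j k * sS1 (n - j) i * (m : ℝ) ^ (n - k - i) *
              (-1 : ℝ) ^ i) *
          dDowling m l k x := by
  have hm' : ((m : ℕ) : ℝ) ≠ 0 := Nat.cast_ne_zero.mpr hm.ne'
  have hid := main_id hl hm' x
  have h := congrArg (coeff n) hid
  rw [coeff_degExp, coeff_mul_scomp (hfps0 l m)] at h
  simp only [coeff_T l m x] at h
  -- compute coeff n (degExp m (-1) * fps ^ k) for each k
  have hBk : ∀ k, coeff n (degExp ((m : ℕ) : ℝ) (-1) *
      (C (1 / (m : ℝ)) * rescale (m : ℝ) (degLog (l / m))) ^ k) =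
      ∑ j ∈ Icc k n,
        ((∑ i ∈ range (n - j + 1), sS1 (n - j) i * (-1 : ℝ) ^ i * (m : ℝ) ^ (n - j - i)) /
            (n - j)!) *
          ((1 / (m : ℝ)) ^ k * (m : ℝ) ^ j * ((k ! : ℝ) / (j ! : ℝ)) * dS1 (l / m) j k) := by
    intro k
    rw [PowerSeries.coeff_mul, Finset.Nat.sum_antidiagonal_eq_sum_range_succ_mk]
    rw [← Finset.sum_range_reflect]
    have hstep : ∀ j ∈ range (n + 1),
        coeff (n - j) (degExp ((m : ℕ) : ℝ) (-1)) *
            coeff (n - (n - j)) ((C (1 / (m : ℝ)) * rescale (m : ℝ) (degLog (l / m))) ^ k) =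
          ((∑ i ∈ range ((n - j) + 1), sS1 (n - j) i * (-1 : ℝ) ^ i * (m : ℝ) ^ ((n - j) - i)) /
              (n - j)!) *
            ((1 / (m : ℝ)) ^ k * (m : ℝ) ^ j * ((k ! : ℝ) / (j ! : ℝ)) * dS1 (l / m) j k) := by
      intro j hj
      have hj' : j ≤ n := by simpa [Nat.lt_succ_iff] using hj
      rw [show n - (n - j) = j by omega, coeff_degExp_neg_one hm', coeff_fps_pow l hm']
    simp only [Nat.succ_sub_one, Nat.succ_eq_add_one, Nat.add_sub_cancel]
    rw [Finset.sum_congr rfl hstep]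
    refine (Finset.sum_subset (fun j hj => ?_) (fun j hj hj' => ?_)).symm
    · rw [Finset.mem_Icc] at hj
      rw [Finset.mem_range]
      omega
    · rw [Finset.mem_range] at hj
      rw [Finset.mem_Icc] at hj'
      have : j < k := by omega
      rw [dS1_eq_zero this, mul_zero, mul_zero]
  simp only [hBk] at h
  have hn : (n ! : ℝ) ≠ 0 := by positivity
  calc dfall l x n = (n ! : ℝ) * (dfall l x n / n !) := by field_simp
    _ = ∑ k ∈ range (n + 1),
          (∑ j ∈ Icc k n, ∑ i ∈ range (n - j + 1),
            n.choose j * dS1 (l / m) j k * sS1 (n - j) i * (m : ℝ) ^ (n - k - i) *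
              (-1 : ℝ) ^ i) * dDowling m l k x := by
        rw [h, Finset.mul_sum]
        refine Finset.sum_congr rfl fun k hk => ?_
        have hk' : k ≤ n := by simpa [Nat.lt_succ_iff] using hk
        have hkf : (k ! : ℝ) ≠ 0 := by positivity
        have hmain : (n ! : ℝ) / k ! *
            (∑ j ∈ Icc k n,
              ((∑ i ∈ range (n - j + 1), sS1 (n - j) i * (-1 : ℝ) ^ i * (m : ℝ) ^ (n - j - i)) /
                  (n - j)!) *
                ((1 / (m : ℝ)) ^ k * (m : ℝ) ^ j * ((k ! : ℝ) / (j ! : ℝ)) *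
                  dS1 (l / m) j k)) =
            ∑ j ∈ Icc k n, ∑ i ∈ range (n - j + 1),
              n.choose j * dS1 (l / m) j k * sS1 (n - j) i * (m : ℝ) ^ (n - k - i) *
                (-1 : ℝ) ^ i := by
          rw [Finset.mul_sum]
          refine Finset.sum_congr rfl fun j hj => ?_
          rw [Finset.mem_Icc] at hj
          have hjf : (j ! : ℝ) ≠ 0 := by positivity
          have hjf2 : ((n - j)! : ℝ) ≠ 0 := by positivity
          have efac : (n ! : ℝ) / k ! * ((k ! : ℝ) / j !) / ((n - j)! : ℝ) =
              (n.choose j : ℝ) := by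
            rw [Nat.cast_choose ℝ hj.2]
            field_simp
          rw [Finset.sum_div, Finset.sum_mul, Finset.mul_sum]
          refine Finset.sum_congr rfl fun i hi => ?_
          have hi' : i ≤ n - j := by simpa [Nat.lt_succ_iff] using hi
          have e : (m : ℝ) ^ (n - j - i) * (1 / (m : ℝ)) ^ k * (m : ℝ) ^ j =
              (m : ℝ) ^ (n - k - i) := by
            have h1 : (m : ℝ) ^ (n - j - i) * (m : ℝ) ^ j = (m : ℝ) ^ (n - i) := by
              rw [← pow_add]
              congr 1
              omega
            have h2 : (m : ℝ) ^ (n - i) = (m : ℝ) ^ (n - k - i) * (m : ℝ) ^ k := by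
              rw [← pow_add]
              congr 1
              omega
            calc (m : ℝ) ^ (n - j - i) * (1 / (m : ℝ)) ^ k * (m : ℝ) ^ j
                = (m : ℝ) ^ (n - j - i) * (m : ℝ) ^ j * (1 / (m : ℝ)) ^ k := by ring
              _ = (m : ℝ) ^ (n - k - i) * ((m : ℝ) ^ k * (1 / (m : ℝ)) ^ k) := by
                  rw [h1, h2]; ring
              _ = (m : ℝ) ^ (n - k - i) := by
                  rw [← mul_pow, mul_one_div_cancel hm', one_pow, mul_one]
          calc (n ! : ℝ) / k ! *
                (sS1 (n - j) i * (-1 : ℝ) ^ i * (m : ℝ) ^ (n - j - i) / (n - j)! *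
                  ((1 / (m : ℝ)) ^ k * (m : ℝ) ^ j * ((k ! : ℝ) / (j ! : ℝ)) *
                    dS1 (l / m) j k))
              = (sS1 (n - j) i * (-1 : ℝ) ^ i * dS1 (l / m) j k) *
                  ((m : ℝ) ^ (n - j - i) * (1 / (m : ℝ)) ^ k * (m : ℝ) ^ j) *
                  ((n ! : ℝ) / k ! * ((k ! : ℝ) / j !) / ((n - j)! : ℝ)) := by ring
            _ = (sS1 (n - j) i * (-1 : ℝ) ^ i * dS1 (l / m) j k) * (m : ℝ) ^ (n - k - i) *
                  (n.choose j : ℝ) := by rw [e, efac]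
            _ = ↑(n.choose j) * dS1 (l / m) j k * sS1 (n - j) i * (m : ℝ) ^ (n - k - i) *
                  (-1 : ℝ) ^ i := by ring
        rw [← hmain]
        ring


end
end
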